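/- For every d ≥ 2 the following are equivalent: (a) CH, i.e., 2^ℵ₀ ≤ ℵ₁; (b) for all well-placed points c₁, …, c_d ∈ ℝ^d there are sets X₁, …, X_d covering ℝ^d such that each X_i is a σ-spray with center c_i; (c) there exist well-placed points c₁, …, c_d ∈ ℝ^d and sets X₁, …, X_d covering ℝ^d such that each X_i is a σ-spray with center c_i. -/

import Mathlib

open Cardinal

/-- A σ-spray with center `c`: every sphere centered at `c` meets `X` in a countable set. -/
def IsSigmaSpray {d : ℕ} (c : EuclideanSpace ℝ (Fin d))
    (X : Set (EuclideanSpace ℝ (Fin d))) : Prop :=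
  ∀ r : ℝ, {x ∈ X | ‖x - c‖ = r}.Countable

/-- Points are well-placed: they lie on a common affine hyperplane and every subset of
size at most `d` is affinely independent. -/
def WellPlaced {d N : ℕ} (c : Fin N → EuclideanSpace ℝ (Fin d)) : Prop :=
  (∃ H : AffineSubspace ℝ (EuclideanSpace ℝ (Fin d)),
      Module.finrank ℝ H.direction = d - 1 ∧ ∀ i, c i ∈ H) ∧
  ∀ s : Finset (Fin N), s.card ≤ d → AffineIndependent ℝ (fun i : s => c i)

open Module Submodule
open scoped RealInnerProductSpace
set_option maxHeartbeats 1000000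

universe u

section Aux

variable {d : ℕ}

lemma sub_mem_orth (c : Fin d → EuclideanSpace ℝ (Fin d)) (i0 : Fin d) (r : Fin d → ℝ)
    {p q : EuclideanSpace ℝ (Fin d)}
    (hp : ∀ i, ‖p - c i‖ = r i) (hq : ∀ i, ‖q - c i‖ = r i) :
    p - q ∈ (span ℝ (Set.range fun i : {i : Fin d // i ≠ i0} => c ↑i - c i0))ᗮ := by
  rw [mem_orthogonal]
  intro v hv
  induction hv using Submodule.span_induction with
  | mem v hv =>
      obtain ⟨i, rfl⟩ := hv
      have h1 : ‖p - c i‖ ^ 2 = ‖q - c i‖ ^ 2 := by rw [hp, hq]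
      have h2 : ‖p - c i0‖ ^ 2 = ‖q - c i0‖ ^ 2 := by rw [hp, hq]
      rw [norm_sub_sq_real, norm_sub_sq_real] at h1 h2
      have e1 : ⟪(c i.1 - c i0 : EuclideanSpace ℝ (Fin d)), p - q⟫
          = (⟪p, c i.1⟫ - ⟪q, c i.1⟫) - (⟪p, c i0⟫ - ⟪q, c i0⟫) := by
        rw [inner_sub_left, inner_sub_right, inner_sub_right,
          real_inner_comm (c i.1) p, real_inner_comm (c i.1) q,
          real_inner_comm (c i0) p, real_inner_comm (c i0) q]
      rw [e1]; linarith
  | zero => simp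
  | add v w _ _ hv hw => rw [inner_add_left, hv, hw]; ring
  | smul a v _ hv => rw [real_inner_smul_left, hv]; ring

lemma fiber_two (c : Fin d → EuclideanSpace ℝ (Fin d)) (i0 : Fin d)
    (hc : AffineIndependent ℝ c) (r : Fin d → ℝ) {x y z : EuclideanSpace ℝ (Fin d)}
    (hx : ∀ i, ‖x - c i‖ = r i) (hy : ∀ i, ‖y - c i‖ = r i) (hz : ∀ i, ‖z - c i‖ = r i) :
    x = y ∨ x = z ∨ y = z := by
  by_cases hxy : x = y
  · exact Or.inl hxy
  by_cases hxz : x = z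
  · exact Or.inr (Or.inl hxz)
  right; right
  set S : Submodule ℝ (EuclideanSpace ℝ (Fin d)) :=
    span ℝ (Set.range fun i : {i : Fin d // i ≠ i0} => c ↑i - c i0) with hS
  have hli : LinearIndependent ℝ (fun i : {i : Fin d // i ≠ i0} => c ↑i - c i0) := by
    have := (affineIndependent_iff_linearIndependent_vsub ℝ c i0).mp hc
    simpa [vsub_eq_sub] using this
  have hfS : finrank ℝ S = d - 1 := by
    rw [hS, finrank_span_eq_card hli]
    simp [Fintype.card_subtype_compl]
  have hfE : finrank ℝ (EuclideanSpace ℝ (Fin d)) = d := finrank_euclideanSpace_fin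
  have hd1 : 1 ≤ d := Nat.one_le_iff_ne_zero.mpr (by rintro rfl; exact (Fin.elim0 i0))
  have hOrth : finrank ℝ Sᗮ = 1 := by
    have := Submodule.finrank_add_finrank_orthogonal (K := S)
    rw [hfS, hfE] at this
    omega
  have hu : x - y ∈ Sᗮ := sub_mem_orth c i0 r hx hy
  have hv : x - z ∈ Sᗮ := sub_mem_orth c i0 r hx hz
  have hune : x - y ≠ 0 := sub_ne_zero.mpr hxy
  have hsp : span ℝ {x - y} = Sᗮ := by
    apply Submodule.eq_of_le_of_finrank_le
    · rw [span_le, Set.singleton_subset_iff]; exact hu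
    · rw [hOrth, finrank_span_singleton hune]
  obtain ⟨a, ha⟩ := Submodule.mem_span_singleton.mp (hsp ▸ hv)
  have h1 : ‖(x - c i0) - (x - y)‖ ^ 2 = ‖x - c i0‖ ^ 2 := by
    have e : (x - c i0) - (x - y) = y - c i0 := by abel
    rw [e, hy, hx]
  have h2 : ‖(x - c i0) - (x - z)‖ ^ 2 = ‖x - c i0‖ ^ 2 := by
    have e : (x - c i0) - (x - z) = z - c i0 := by abel
    rw [e, hz, hx]
  rw [norm_sub_sq_real] at h1 h2
  rw [← ha, real_inner_smul_right, norm_smul, mul_pow, Real.norm_eq_abs, sq_abs] at h2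
  have hnu : (0:ℝ) < ‖x - y‖ ^ 2 := by
    have := norm_pos_iff.mpr hune
    positivity
  have key : a = 1 := by
    have h1' : 2 * ⟪x - c i0, x - y⟫ = ‖x - y‖ ^ 2 := by linarith
    have h2' : 2 * (a * ⟪x - c i0, x - y⟫) = a ^ 2 * ‖x - y‖ ^ 2 := by linarith
    have ha2 : a * ‖x - y‖ ^ 2 = a ^ 2 * ‖x - y‖ ^ 2 := by linear_combination h2' - a * h1'
    have : a = a ^ 2 := mul_right_cancel₀ (ne_of_gt hnu) ha2
    have h0 : a ≠ 0 := by
      rintro rfl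
      rw [zero_smul] at ha
      exact hxz (sub_eq_zero.mp ha.symm)
    rcases mul_eq_zero.mp (show a * (a - 1) = 0 by linear_combination -this) with h | h
    · exact absurd h h0
    · linarith
  rw [key, one_smul] at ha
  exact sub_right_inj.mp ha

lemma fiber_countable (c : Fin d → EuclideanSpace ℝ (Fin d)) (i0 : Fin d)
    (hc : AffineIndependent ℝ c) (r : Fin d → ℝ) :
    {x : EuclideanSpace ℝ (Fin d) | ∀ i, ‖x - c i‖ = r i}.Countable := by
  set F := {x : EuclideanSpace ℝ (Fin d) | ∀ i, ‖x - c i‖ = r i} with hF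
  by_cases h : ∃ p ∈ F, ∃ q ∈ F, p ≠ q
  · obtain ⟨p, hp, q, hq, hpq⟩ := h
    apply Set.Countable.mono (s₁ := F) (s₂ := {p, q}) ?_ ((Set.countable_singleton q).insert p)
    intro w hw
    simp only [Set.mem_insert_iff, Set.mem_singleton_iff]
    rcases fiber_two c i0 hc r hp hw hq with h' | h' | h'
    · exact Or.inl h'.symm
    · exact absurd h' hpq
    · exact Or.inr h'
  · push_neg at h
    exact Set.Subsingleton.countable (fun p hp q hq => by
      by_contra hne; exact hne (by by_contra hne2; exact hne2 ((h p hp q hq) ▸ rfl)))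

lemma cover_of_CH {d : ℕ} (hd : 2 ≤ d) (h : Cardinal.continuum.{0} ≤ Cardinal.aleph.{0} 1)
    (c : Fin d → EuclideanSpace ℝ (Fin d)) (hc : AffineIndependent ℝ c) :
    ∃ X : Fin d → Set (EuclideanSpace ℝ (Fin d)),
      (⋃ i, X i) = Set.univ ∧ ∀ i, IsSigmaSpray (c i) (X i) := by
  haveI : NeZero d := ⟨by omega⟩
  obtain ⟨f⟩ : Nonempty (ℝ ↪ (aleph 1).ord.ToType) := by
    rw [← Cardinal.le_def, Cardinal.mk_real, Cardinal.mk_ord_toType]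
    exact h
  refine ⟨fun i => {x | ∀ k, f ‖x - c k‖ ≤ f ‖x - c i‖}, ?_, ?_⟩
  · ext x
    simp only [Set.mem_iUnion, Set.mem_univ, iff_true, Set.mem_setOf_eq]
    exact Finite.exists_max fun k => f ‖x - c k‖
  · intro i r
    have hIic : (Set.Iic (f r)).Countable := by
      rw [← Set.Iio_union_right]
      refine Set.Countable.union ?_ (Set.countable_singleton _)
      rw [Cardinal.countable_iff_lt_aleph_one]
      exact Cardinal.mk_Iio_toType_ord_lt (f r)
    have hQ : (f ⁻¹' (Set.Iic (f r))).Countable := hIic.preimage f.injective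
    have hT : (Set.pi Set.univ fun _ : Fin d => f ⁻¹' (Set.Iic (f r))).Countable :=
      Set.countable_univ_pi fun _ => hQ
    apply Set.Countable.mono ?_
      (hT.biUnion fun g _ => fiber_countable c ⟨0, by omega⟩ hc g)
    intro x hx
    obtain ⟨hxi, hxr⟩ := hx
    have hxmem : x ∈ {y : EuclideanSpace ℝ (Fin d) | ∀ k, ‖y - c k‖ = (fun k => ‖x - c k‖) k} :=
      fun k => rfl
    refine Set.mem_biUnion ?_ hxmem
    rw [Set.mem_univ_pi]
    intro k
    simp only [Set.mem_preimage, Set.mem_Iic]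
    calc f ‖x - c k‖ ≤ f ‖x - c i‖ := hxi k
    _ = f r := by rw [hxr]

lemma sphere_inter_exists {d : ℕ} (hd : 2 ≤ d) [NeZero d]
    (c : Fin d → EuclideanSpace ℝ (Fin d)) (hc : AffineIndependent ℝ c) :
    ∃ K ε : ℝ, 0 < ε ∧ ∀ r t : ℝ, r ∈ Set.Ioo K (K + ε) → t ∈ Set.Ioo K (K + ε) →
      ∃ x : EuclideanSpace ℝ (Fin d), ‖x - c 0‖ = r ∧ ∀ i : Fin d, i ≠ 0 → ‖x - c i‖ = t := by
  classical
  have h01 : (0 : Fin d) ≠ 1 := by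
    have hv : (0:Fin d).val ≠ (1:Fin d).val := by
      rw [Fin.val_zero, Fin.val_one', Nat.mod_eq_of_lt (by omega)]
      omega
    exact fun h => hv (congrArg Fin.val h)
  -- circumcenter
  have hd1 : d - 1 + 1 = d := by omega
  let e : Fin (d - 1 + 1) ≃ Fin d := finCongr hd1
  let s : Affine.Simplex ℝ (EuclideanSpace ℝ (Fin d)) (d - 1) :=
    ⟨c ∘ e, (affineIndependent_equiv e).mpr hc⟩
  set o := s.circumcenter with ho_def
  set ρ := s.circumradius with hρ_def
  have ho : ∀ i : Fin d, ‖o - c i‖ = ρ := by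
    intro i
    have h := s.dist_circumcenter_eq_circumradius (e.symm i)
    have h2 : s.points (e.symm i) = c i := by
      show c (e (e.symm i)) = c i
      rw [e.apply_symm_apply]
    rw [h2, dist_eq_norm, norm_sub_rev] at h
    exact h
  have hρ0 : 0 ≤ ρ := (ho 0) ▸ norm_nonneg _
  have hoSpan : o ∈ affineSpan ℝ (Set.range c) := by
    have h := s.circumcenter_mem_affineSpan
    have hr : Set.range (c ∘ e) = Set.range c := e.surjective.range_comp c
    rwa [show s.points = c ∘ e from rfl, hr] at h
  -- normal direction n
  set vs := vectorSpan ℝ (Set.range c) with hvs_def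
  have hvs : finrank ℝ vs = d - 1 :=
    hc.finrank_vectorSpan (by rw [Fintype.card_fin]; omega)
  have hvso : finrank ℝ vsᗮ = 1 := by
    have h := Submodule.finrank_add_finrank_orthogonal (K := vs)
    rw [hvs, finrank_euclideanSpace_fin] at h
    omega
  haveI : Nontrivial vsᗮ := by
    apply Module.nontrivial_of_finrank_pos (R := ℝ)
    omega
  obtain ⟨n', hn'⟩ := exists_ne (0 : vsᗮ)
  set n : EuclideanSpace ℝ (Fin d) := (n' : EuclideanSpace ℝ (Fin d)) with hn_def
  have hn0 : n ≠ 0 := fun h => hn' (Subtype.ext h)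
  have hn_vs : ∀ w ∈ vs, ⟪w, n⟫ = 0 := (Submodule.mem_orthogonal vs n).mp n'.2
  -- u
  set f : {i : Fin d // i ≠ (1:Fin d)} → EuclideanSpace ℝ (Fin d) := fun i => c ↑i - c 1 with hf_def
  have hlif : LinearIndependent ℝ f := by
    have h := (affineIndependent_iff_linearIndependent_vsub ℝ c 1).mp hc
    simpa [hf_def, vsub_eq_sub] using h
  set sset : Set {i : Fin d // i ≠ (1:Fin d)} := {j | (j : Fin d) ≠ 0} with hsset
  set V : Submodule ℝ (EuclideanSpace ℝ (Fin d)) := Submodule.span ℝ (f '' sset) with hV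
  set w : EuclideanSpace ℝ (Fin d) := c 0 - c 1 with hw
  set u : EuclideanSpace ℝ (Fin d) := w - (orthogonalProjection V w : EuclideanSpace ℝ (Fin d)) with hu
  have hu_orth : u ∈ Vᗮ := by exact Submodule.sub_starProjection_mem_orthogonal (K := V) w
  have hproj_mem : ((orthogonalProjection V w : EuclideanSpace ℝ (Fin d))) ∈ V := SetLike.coe_mem _
  have hu0 : u ≠ 0 := by
    intro h
    have hwV : w ∈ V := by
      have : w = (orthogonalProjection V w : EuclideanSpace ℝ (Fin d)) := by
        have := sub_eq_zero.mp (hu ▸ h)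
        exact this
      rw [this]; exact hproj_mem
    have hnot : f ⟨0, h01⟩ ∉ Submodule.span ℝ (f '' sset) :=
      hlif.notMem_span_image (by simp [hsset])
    exact hnot hwV
  have hwvs : w ∈ vs := vsub_mem_vectorSpan ℝ (Set.mem_range_self 0) (Set.mem_range_self 1)
  have hV_le_vs : V ≤ vs := by
    rw [hV, Submodule.span_le]
    rintro _ ⟨j, _, rfl⟩
    exact vsub_mem_vectorSpan ℝ (Set.mem_range_self _) (Set.mem_range_self 1)
  have hu_vs : u ∈ vs := by
    rw [hu]; exact Submodule.sub_mem _ hwvs (hV_le_vs hproj_mem)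
  have hun : ⟪u, n⟫ = 0 := hn_vs u hu_vs
  have hVu : ∀ v ∈ V, ⟪v, u⟫ = 0 := (Submodule.mem_orthogonal V u).mp hu_orth
  have hwu : ⟪w, u⟫ = ‖u‖^2 := by
    have hwe : w = u + (orthogonalProjection V w : EuclideanSpace ℝ (Fin d)) := by
      rw [hu]; abel
    rw [hwe, inner_add_left, real_inner_self_eq_norm_sq, hVu _ hproj_mem, add_zero]
  have hcu : ∀ i : Fin d, i ≠ 0 → ⟪c i - c 1, u⟫ = 0 := by
    intro i hi
    by_cases hi1 : i = (1 : Fin d)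
    · subst hi1; simp
    · exact hVu _ (Submodule.subset_span ⟨⟨i, hi1⟩, by simp [hsset, hi], rfl⟩)
  -- gamma
  set γ : ℝ := ⟪o - c 1, u⟫ with hγ_def
  have hγi : ∀ i : Fin d, i ≠ 0 → ⟪o - c i, u⟫ = γ := by
    intro i hi
    have he : o - c i = (o - c 1) + -(c i - c 1) := by abel
    rw [he, inner_add_left, inner_neg_left, hcu i hi, neg_zero, add_zero]
  have hγ0 : ⟪o - c 0, u⟫ = γ - ‖u‖^2 := by
    have he : o - c 0 = (o - c 1) + -w := by rw [hw]; abel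
    rw [he, inner_add_left, inner_neg_left, hwu]
    ring
  have ho_n : ∀ i : Fin d, ⟪o - c i, n⟫ = 0 := by
    intro i
    apply hn_vs
    have h1 : c i ∈ affineSpan ℝ (Set.range c) := mem_affineSpan ℝ (Set.mem_range_self i)
    have h2 := AffineSubspace.vsub_mem_direction hoSpan h1
    rwa [direction_affineSpan] at h2
  -- expansion
  have expand : ∀ (w0 : EuclideanSpace ℝ (Fin d)) (α β : ℝ), ⟪w0, n⟫ = 0 →
      ‖w0 + (α • u + β • n)‖^2
        = ‖w0‖^2 + α^2*‖u‖^2 + β^2*‖n‖^2 + 2*α*⟪w0, u⟫ := by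
    intro w0 α β hw0n
    rw [norm_add_sq_real, norm_add_sq_real (α • u) (β • n),
      inner_add_right, real_inner_smul_right, real_inner_smul_right, hw0n,
      real_inner_smul_left, real_inner_smul_right, hun,
      norm_smul, norm_smul, mul_pow, mul_pow, Real.norm_eq_abs, Real.norm_eq_abs,
      sq_abs, sq_abs]
    ring
  -- constants
  have hnu : 0 < ‖u‖ := norm_pos_iff.mpr hu0
  have hnn : 0 < ‖n‖ := norm_pos_iff.mpr hn0
  set K : ℝ := ρ + ‖u‖ + |γ| + 1 with hK_def
  have hK1 : 1 ≤ K := by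
    have := abs_nonneg γ
    rw [hK_def]; linarith
  set ε : ℝ := min 1 (‖u‖^2 / (2*K)) with hε_def
  have hε : 0 < ε := lt_min one_pos (by positivity)
  have hε1 : ε ≤ 1 := min_le_left _ _
  have hεK : ε ≤ ‖u‖^2/(2*K) := min_le_right _ _
  refine ⟨K, ε, hε, ?_⟩
  rintro r t ⟨hr1, hr2⟩ ⟨ht1, ht2⟩
  have hr0 : 0 < r := lt_of_le_of_lt (by linarith) hr1
  have ht0 : 0 < t := lt_of_le_of_lt (by linarith) ht1
  set α : ℝ := (t^2 - r^2)/(2*‖u‖^2) with hα_def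
  have hα2 : α * (2*‖u‖^2) = t^2 - r^2 := by
    rw [hα_def]; field_simp
  have hα1 : |α| ≤ 1 := by
    rw [hα_def, abs_div, abs_of_pos (show (0:ℝ) < 2*‖u‖^2 by positivity),
      div_le_one (by positivity)]
    have h1 : |t^2 - r^2| ≤ ε * (2*K + 2) := by
      have he : t^2 - r^2 = (t - r)*(t + r) := by ring
      rw [he, abs_mul]
      have h2 : |t - r| ≤ ε := by
        rw [abs_le]; constructor <;> linarith
      have h3 : |t + r| ≤ 2*K + 2 := by
        rw [abs_le]; constructor <;> linarith
      exact mul_le_mul h2 h3 (abs_nonneg _) (le_of_lt hε)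
    have h4 : ε * (2*K+2) ≤ 2*‖u‖^2 := by
      have h5 : ε * (2*K+2) ≤ (‖u‖^2/(2*K)) * (2*K+2) := by
        apply mul_le_mul_of_nonneg_right hεK (by linarith)
      have h6 : (‖u‖^2/(2*K)) * (2*K+2) ≤ 2*‖u‖^2 := by
        rw [div_mul_eq_mul_div, div_le_iff₀ (by linarith)]
        have h7 : (2*K+2) ≤ 4*K := by linarith
        calc ‖u‖^2 * (2*K+2) ≤ ‖u‖^2 * (4*K) := by
              apply mul_le_mul_of_nonneg_left h7 (by positivity)
          _ = 2*‖u‖^2*(2*K) := by ring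
      exact le_trans h5 h6
    linarith
  set A : ℝ := t^2 - ρ^2 - α^2*‖u‖^2 - 2*α*γ with hA_def
  have hA : 0 ≤ A := by
    have hαsq : α^2 ≤ 1 := by
      nlinarith [sq_abs α, hα1, abs_nonneg α]
    have hαγ : α*γ ≤ |γ| := by
      calc α*γ ≤ |α * γ| := le_abs_self _
        _ = |α| * |γ| := abs_mul _ _
        _ ≤ 1 * |γ| := mul_le_mul_of_nonneg_right hα1 (abs_nonneg _)
        _ = |γ| := one_mul _
    have htK : K ≤ t := le_of_lt ht1
    have hKsq : ρ^2 + ‖u‖^2 + 2*|γ| ≤ K^2 := by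
      rw [hK_def]
      nlinarith [abs_nonneg γ, hρ0, hnu]
    have ht2' : K^2 ≤ t^2 := by nlinarith
    rw [hA_def]
    nlinarith [mul_le_mul_of_nonneg_right hαsq (le_of_lt (mul_pos hnu hnu))]
  set β : ℝ := Real.sqrt A / ‖n‖ with hβ_def
  have hβ : β^2 * ‖n‖^2 = A := by
    rw [hβ_def, div_pow, div_mul_cancel₀ _ (by positivity), Real.sq_sqrt hA]
  refine ⟨o + (α • u + β • n), ?_, ?_⟩
  · have hx0 : o + (α•u + β•n) - c 0 = (o - c 0) + (α•u + β•n) := by abel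
    have hsq : ‖o + (α•u + β•n) - c 0‖^2 = r^2 := by
      rw [hx0, expand _ _ _ (ho_n 0), ho 0, hγ0, hβ]
      rw [hA_def]
      linarith [hα2]
    rcases mul_eq_zero.mp (show (‖o + (α•u + β•n) - c 0‖ - r)*(‖o + (α•u + β•n) - c 0‖ + r) = 0
      by linear_combination hsq) with h | h
    · linarith
    · linarith [norm_nonneg (o + (α•u + β•n) - c 0)]
  · intro i hi
    have hx0 : o + (α•u + β•n) - c i = (o - c i) + (α•u + β•n) := by abel
    have hsq : ‖o + (α•u + β•n) - c i‖^2 = t^2 := by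
      rw [hx0, expand _ _ _ (ho_n i), ho i, hγi i hi, hβ]
      rw [hA_def]
      ring
    rcases mul_eq_zero.mp (show (‖o + (α•u + β•n) - c i‖ - t)*(‖o + (α•u + β•n) - c i‖ + t) = 0
      by linear_combination hsq) with h | h
    · linarith
    · linarith [norm_nonneg (o + (α•u + β•n) - c i)]

lemma CH_of_cover {d : ℕ} (hd : 2 ≤ d) (c : Fin d → EuclideanSpace ℝ (Fin d))
    (hc : AffineIndependent ℝ c) (X : Fin d → Set (EuclideanSpace ℝ (Fin d)))
    (hcov : (⋃ i, X i) = Set.univ)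
    (hspray : ∀ i, ∀ r : ℝ, {x ∈ X i | ‖x - c i‖ = r}.Countable) :
    Cardinal.continuum.{0} ≤ Cardinal.aleph.{0} 1 := by
  classical
  haveI : NeZero d := ⟨by omega⟩
  have h01 : (1 : Fin d) ≠ 0 := by
    have hv : (1:Fin d).val ≠ (0:Fin d).val := by
      rw [Fin.val_zero, Fin.val_one', Nat.mod_eq_of_lt (by omega)]
      omega
    exact fun h => hv (congrArg Fin.val h)
  by_contra hch
  have hch' : aleph 1 < continuum := lt_of_not_ge hch
  obtain ⟨K, ε, hε, hex⟩ := sphere_inter_exists hd c hc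
  have hIoo : #(Set.Ioo K (K+ε)) = continuum := Cardinal.mk_Ioo_real (by linarith)
  obtain ⟨T, hT_sub, hT_card⟩ := Cardinal.le_mk_iff_exists_subset.mp
    (show aleph 1 ≤ #(Set.Ioo K (K+ε)) by rw [hIoo]; exact aleph_one_le_continuum)
  obtain ⟨R, hR_sub, hR_card⟩ := Cardinal.le_mk_iff_exists_subset.mp
    (show Order.succ (aleph 1) ≤ #(Set.Ioo K (K+ε)) by
      rw [hIoo]; exact Order.succ_le_of_lt hch')
  set B : Fin d × ↥T → Set (EuclideanSpace ℝ (Fin d)) :=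
    fun p => {x ∈ X p.1 | ‖x - c p.1‖ = ↑p.2} with hB
  set C : Set (EuclideanSpace ℝ (Fin d)) := ⋃ p, B p with hC
  have hC_card : #C ≤ aleph 1 := by
    have h1 : #C ≤ #(Fin d × ↥T) * ⨆ p, #(B p) := Cardinal.mk_iUnion_le _
    have h2 : ⨆ p, #(B p) ≤ ℵ₀ := by
      apply ciSup_le'
      intro p
      rw [Cardinal.mk_le_aleph0_iff]
      exact Set.countable_coe_iff.mpr (hspray p.1 ↑p.2)
    have h3 : #(Fin d × ↥T) ≤ aleph 1 := by
      rw [Cardinal.mk_prod, Cardinal.lift_id, Cardinal.lift_id, Cardinal.mk_fin, hT_card]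
      calc (d : Cardinal) * aleph 1 ≤ aleph 1 * aleph 1 := by
            apply mul_le_mul_left
            exact le_trans (le_of_lt (Cardinal.nat_lt_aleph0 d)) (Cardinal.aleph0_le_aleph 1)
        _ = aleph 1 := Cardinal.mul_eq_self (Cardinal.aleph0_le_aleph 1)
    calc #C ≤ #(Fin d × ↥T) * ⨆ p, #(B p) := h1
      _ ≤ aleph 1 * ℵ₀ := mul_le_mul' h3 h2
      _ ≤ aleph 1 * aleph 1 := mul_le_mul' le_rfl (Cardinal.aleph0_le_aleph 1)
      _ = aleph 1 := Cardinal.mul_eq_self (Cardinal.aleph0_le_aleph 1)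
  have hsel : ∀ r : ↥R, ∃ x, x ∈ C ∧ ‖x - c 0‖ = ↑r := by
    rintro ⟨r, hr⟩
    set W : Set (EuclideanSpace ℝ (Fin d)) :=
      {x | ‖x - c 0‖ = r ∧ ∀ i, i ≠ 0 → ‖x - c i‖ ∈ T} with hW
    have hg : ∀ t : ↥T, ∃ x, x ∈ W ∧ ‖x - c 1‖ = ↑t := by
      rintro ⟨t, ht⟩
      obtain ⟨x, hx0, hxi⟩ := hex r t (hR_sub hr) (hT_sub ht)
      exact ⟨x, ⟨hx0, fun i hi => (hxi i hi) ▸ ht⟩, hxi 1 h01⟩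
    choose g hgW hgt using hg
    have hginj : Function.Injective (fun t : ↥T => (⟨g t, hgW t⟩ : ↥W)) := by
      intro t1 t2 h
      apply Subtype.ext
      have := congrArg (fun y : ↥W => ‖(y : EuclideanSpace ℝ (Fin d)) - c 1‖) h
      simpa [hgt t1, hgt t2] using this
    have hWbig : aleph 1 ≤ #W := hT_card ▸ Cardinal.mk_le_of_injective hginj
    have hWnc : ¬ W.Countable := by
      intro hcnt
      have h := Cardinal.mk_le_aleph0_iff.mpr (Set.countable_coe_iff.mpr hcnt)
      exact absurd (le_trans hWbig h) (not_le.mpr (Cardinal.aleph0_lt_aleph_one))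
    have hWns : ¬ W ⊆ {x ∈ X 0 | ‖x - c 0‖ = r} := by
      intro hsub
      exact hWnc ((hspray 0 r).mono hsub)
    obtain ⟨x, hxW, hxn0⟩ := Set.not_subset.mp hWns
    have hxU : x ∈ ⋃ i, X i := hcov ▸ Set.mem_univ x
    obtain ⟨i, hxi⟩ := Set.mem_iUnion.mp hxU
    have hi0 : i ≠ 0 := by
      rintro rfl
      exact hxn0 ⟨hxi, hxW.1⟩
    exact ⟨x, Set.mem_iUnion.mpr ⟨(i, ⟨‖x - c i‖, hxW.2 i hi0⟩), ⟨hxi, rfl⟩⟩, hxW.1⟩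
  choose g hgC hgr using hsel
  have hGinj : Function.Injective (fun r : ↥R => (⟨g r, hgC r⟩ : ↥C)) := by
    intro r1 r2 h
    apply Subtype.ext
    have := congrArg (fun y : ↥C => ‖(y : EuclideanSpace ℝ (Fin d)) - c 0‖) h
    simpa [hgr r1, hgr r2] using this
  have hle : Order.succ (aleph 1) ≤ #C := hR_card ▸ Cardinal.mk_le_of_injective hGinj
  exact absurd (le_trans hle hC_card) (not_le.mpr (Order.lt_succ _))

end Aux

lemma CH_univ_iff : (Cardinal.continuum.{u} ≤ Cardinal.aleph.{u} 1) ↔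
    (Cardinal.continuum.{0} ≤ Cardinal.aleph.{0} 1) := by
  rw [← Cardinal.lift_le.{u, 0}, Cardinal.lift_continuum, Cardinal.lift_aleph]
  norm_num

lemma wellPlaced_affineIndependent {d : ℕ} {c : Fin d → EuclideanSpace ℝ (Fin d)}
    (h : WellPlaced c) : AffineIndependent ℝ c := by
  have h2 := h.2 Finset.univ (by simp)
  rw [← affineIndependent_equiv (Equiv.subtypeUnivEquiv (fun x => Finset.mem_univ x) :
    ((Finset.univ : Finset (Fin d)) : Type) ≃ Fin d)]
  exact h2

lemma exists_wellPlaced {d : ℕ} (hd : 2 ≤ d) :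
    ∃ c : Fin d → EuclideanSpace ℝ (Fin d), WellPlaced c := by
  classical
  haveI : NeZero d := ⟨by omega⟩
  set c : Fin d → EuclideanSpace ℝ (Fin d) :=
    fun i => if i = 0 then 0 else EuclideanSpace.single i 1 with hc_def
  have hli : LinearIndependent ℝ (fun i : {i : Fin d // i ≠ 0} => c ↑i - c 0) := by
    have hb := (EuclideanSpace.basisFun (Fin d) ℝ).toBasis.linearIndependent
    have heq : (fun i : {i : Fin d // i ≠ 0} => c ↑i - c 0)
        = fun i : {i : Fin d // i ≠ 0} => (EuclideanSpace.basisFun (Fin d) ℝ).toBasis ↑i := by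
      funext i
      rw [OrthonormalBasis.coe_toBasis, EuclideanSpace.basisFun_apply, hc_def]
      simp [i.2]
    rw [heq]
    exact hb.comp Subtype.val Subtype.val_injective
  have hfull : AffineIndependent ℝ c := by
    rw [affineIndependent_iff_linearIndependent_vsub ℝ c 0]
    simpa [vsub_eq_sub] using hli
  refine ⟨c, ⟨?_, ?_⟩⟩
  · refine ⟨(Submodule.span ℝ (Set.range fun i : {i : Fin d // i ≠ 0} =>
      (EuclideanSpace.single (i : Fin d) (1:ℝ) : EuclideanSpace ℝ (Fin d)))).toAffineSubspace,
      ?_, ?_⟩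
    · rw [Submodule.toAffineSubspace_direction]
      have hli2 : LinearIndependent ℝ (fun i : {i : Fin d // i ≠ 0} =>
          (EuclideanSpace.single (i : Fin d) (1:ℝ) : EuclideanSpace ℝ (Fin d))) := by
        have hb := (EuclideanSpace.basisFun (Fin d) ℝ).toBasis.linearIndependent
        have heq : (fun i : {i : Fin d // i ≠ 0} =>
            (EuclideanSpace.single (i : Fin d) (1:ℝ) : EuclideanSpace ℝ (Fin d)))
            = fun i : {i : Fin d // i ≠ 0} => (EuclideanSpace.basisFun (Fin d) ℝ).toBasis ↑i := by
          funext i; rw [OrthonormalBasis.coe_toBasis, EuclideanSpace.basisFun_apply]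
        rw [heq]
        exact hb.comp Subtype.val Subtype.val_injective
      rw [finrank_span_eq_card hli2]
      simp [Fintype.card_subtype_compl]
    · intro i
      rw [Submodule.mem_toAffineSubspace]
      by_cases hi : i = 0
      · subst hi; simp [hc_def]
      · have : c i = EuclideanSpace.single i (1:ℝ) := by simp [hc_def, hi]
        rw [this]
        exact Submodule.subset_span ⟨⟨i, hi⟩, rfl⟩
  · intro s _
    exact hfull.comp_embedding (Function.Embedding.subtype fun i => i ∈ s)


theorem stmt4 (d : ℕ) (hd : 2 ≤ d) :
    ((continuum ≤ aleph 1 ↔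
      (∀ c : Fin d → EuclideanSpace ℝ (Fin d), WellPlaced c →
        ∃ X : Fin d → Set (EuclideanSpace ℝ (Fin d)),
          (⋃ i, X i) = Set.univ ∧ ∀ i, IsSigmaSpray (c i) (X i))) ∧
     (continuum ≤ aleph 1 ↔
      (∃ c : Fin d → EuclideanSpace ℝ (Fin d), WellPlaced c ∧
        ∃ X : Fin d → Set (EuclideanSpace ℝ (Fin d)),
          (⋃ i, X i) = Set.univ ∧ ∀ i, IsSigmaSpray (c i) (X i)))) := by
  constructor
  · constructor
    · intro h c hc
      exact cover_of_CH hd (CH_univ_iff.mp h) c (wellPlaced_affineIndependent hc)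
    · intro hb
      obtain ⟨c, hc⟩ := exists_wellPlaced hd
      obtain ⟨X, hX1, hX2⟩ := hb c hc
      exact CH_univ_iff.mpr
        (CH_of_cover hd c (wellPlaced_affineIndependent hc) X hX1 (fun i r => hX2 i r))
  · constructor
    · intro h
      obtain ⟨c, hc⟩ := exists_wellPlaced hd
      exact ⟨c, hc, cover_of_CH hd (CH_univ_iff.mp h) c (wellPlaced_affineIndependent hc)⟩
    · rintro ⟨c, hc, X, hX1, hX2⟩
      exact CH_univ_iff.mpr
        (CH_of_cover hd c (wellPlaced_affineIndependent hc) X hX1 (fun i r => hX2 i r))
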